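/- Let p ∈ (0,1], let M₁, M₂ be functions on [0,1] with M_i(t^{1/p}) Orlicz functions, φ_{M₁}, φ_{M₂} their fundamental functions, and let (α_i) be a non-increasing sequence of non-negative reals. For k ∈ ℕ define Θ(k) = max_{k ≤ n ≤ 2^{k−1}} α_n · φ_{M₂}(k/log₂(2n/k)) / φ_{M₁}(k/log₂(2n/k)) and Λ(k) = max_{1 ≤ s ≤ k} α_{k·2^{s−1}} · φ_{M₂}(k/s)/φ_{M₁}(k/s). Then 2^{−2/p} Λ(k) ≤ Θ(k) ≤ 2^{1/p} Λ(k). -/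

import Mathlib

open Real

lemma aux_k_le' (k : ℕ) (hk : 1 ≤ k) : k ≤ 2 ^ (k - 1) := by
  rcases Nat.exists_eq_add_of_le hk with ⟨m, rfl⟩
  simp only [Nat.add_sub_cancel_left]
  induction m with
  | zero => simp
  | succ n ih =>
    have h2 : 2 ^ (n+1) = 2 * 2^n := by ring
    omega

lemma aux_pow4 (k : ℕ) (hk : 1 ≤ k) : (k:ℝ)^4 ≤ 8 ^ k := by
  induction k with
  | zero => omega
  | succ n ih =>
    rcases Nat.lt_or_ge n 2 with h | h
    · interval_cases n <;> norm_num
    · have hn : 1 ≤ n := by omega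
      have h8 := ih hn
      have hn2 : (2:ℝ) ≤ n := by exact_mod_cast h
      have key : ((n:ℝ)+1)^4 ≤ 8 * (n:ℝ)^4 := by
        nlinarith [sq_nonneg ((n:ℝ)-2), sq_nonneg (n:ℝ), sq_nonneg ((n:ℝ)^2 - 2*n)]
      have h9 : (8:ℝ)^(n+1) = 8 * 8^n := by ring
      push_cast
      rw [h9]
      linarith

lemma aux_quot {a a' x x' y y' c : ℝ} (ha : 0 ≤ a) (haa : a ≤ a') (hx : 0 ≤ x)
    (hxx : x ≤ x') (hy : 0 < y) (hy' : 0 < y') (hyy : y' ≤ c * y) :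
    a * x / y ≤ c * (a' * x' / y') := by
  have hax : a * x ≤ a' * x' := mul_le_mul haa hxx hx (le_trans ha haa)
  rw [div_le_iff₀ hy, show c * (a' * x' / y') * y = (c * (a' * x') * y) / y' from by ring,
    le_div_iff₀ hy']
  nlinarith [mul_le_mul hax hyy hy'.le (mul_nonneg (le_trans ha haa) (le_trans hx hxx))]

lemma aux_phi (p : ℝ) (hp0 : 0 < p) (M Minv : ℝ → ℝ)
    (hcont : ContinuousOn M (Set.Icc 0 1)) (hmono : StrictMonoOn M (Set.Icc 0 1))
    (hconv : ConvexOn ℝ (Set.Icc 0 1) (fun t => M (t ^ (1 / p))))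
    (hM0 : M 0 = 0) (hM1 : M 1 = 1)
    (hinv : ∀ t ∈ Set.Icc (0:ℝ) 1, M (Minv t) = t)
    (hinv' : ∀ t ∈ Set.Icc (0:ℝ) 1, Minv (M t) = t)
    (φ : ℝ → ℝ) (hφ : ∀ t ≥ (1:ℝ), φ t = 1 / Minv (1 / t)) :
    (∀ t, 1 ≤ t → 0 < φ t) ∧ (∀ t t', 1 ≤ t → t ≤ t' → φ t ≤ φ t') ∧
      (∀ t C, 1 ≤ t → 1 ≤ C → φ (C * t) ≤ C ^ (1/p) * φ t) := by
  have hmem : ∀ u ∈ Set.Icc (0:ℝ) 1, Minv u ∈ Set.Icc (0:ℝ) 1 := by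
    intro u hu
    have hsub : Set.Icc (M 0) (M 1) ⊆ M '' Set.Icc 0 1 :=
      intermediate_value_Icc (by norm_num) hcont
    rw [hM0, hM1] at hsub
    obtain ⟨x, hx, hxu⟩ := hsub hu
    rw [← hxu, hinv' x hx]; exact hx
  have hMinvMono : ∀ a ∈ Set.Icc (0:ℝ) 1, ∀ b ∈ Set.Icc (0:ℝ) 1, a ≤ b → Minv a ≤ Minv b := by
    intro a ha b hb hab
    by_contra hlt
    push_neg at hlt
    have := hmono (hmem b hb) (hmem a ha) hlt
    rw [hinv a ha, hinv b hb] at this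
    linarith
  have hMinvPos : ∀ u, 0 < u → u ≤ 1 → 0 < Minv u := by
    intro u hu hu1
    have h := hmem u ⟨hu.le, hu1⟩
    rcases lt_or_eq_of_le h.1 with h' | h'
    · exact h'
    · exfalso
      have := hinv u ⟨hu.le, hu1⟩
      rw [← h', hM0] at this; linarith
  have hkey : ∀ l u : ℝ, 0 ≤ l → l ≤ 1 → 0 ≤ u → u ≤ 1 →
      l ^ (1/p) * Minv u ≤ Minv (l * u) := by
    intro l u hl0 hl1 hu0 hu1
    set x := Minv u with hx
    have hxmem : x ∈ Set.Icc (0:ℝ) 1 := hmem u ⟨hu0, hu1⟩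
    have hxp : x ^ p ∈ Set.Icc (0:ℝ) 1 :=
      ⟨Real.rpow_nonneg hxmem.1 p, Real.rpow_le_one hxmem.1 hxmem.2 hp0.le⟩
    have hc := hconv.2 hxp (Set.mem_Icc.mpr ⟨le_refl 0, zero_le_one⟩) hl0
      (by linarith : (0:ℝ) ≤ 1 - l) (by ring : l + (1 - l) = 1)
    simp only [smul_eq_mul, mul_zero, add_zero, mul_one] at hc
    have h0 : ((0:ℝ)) ^ (1/p) = 0 := Real.zero_rpow (by positivity)
    rw [h0, hM0, mul_zero, add_zero] at hc
    have hxpx : (x ^ p) ^ (1/p) = x := by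
      rw [← Real.rpow_mul hxmem.1, mul_one_div_cancel hp0.ne', Real.rpow_one]
    rw [hxpx, hinv u ⟨hu0, hu1⟩] at hc
    have hlxp : (l * x ^ p) ^ (1/p) = l ^ (1/p) * x := by
      rw [Real.mul_rpow hl0 hxp.1, hxpx]
    rw [hlxp] at hc
    have hmm : l ^ (1/p) * x ∈ Set.Icc (0:ℝ) 1 := by
      constructor
      · exact mul_nonneg (Real.rpow_nonneg hl0 _) hxmem.1
      · calc l ^ (1/p) * x ≤ 1 * 1 := by
              apply mul_le_mul (Real.rpow_le_one hl0 hl1 (by positivity)) hxmem.2 hxmem.1 zero_le_one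
            _ = 1 := by ring
    have hMmm : M (l ^ (1/p) * x) ∈ Set.Icc (0:ℝ) 1 := by
      constructor
      · have := hmono.monotoneOn (Set.mem_Icc.mpr ⟨le_refl 0, zero_le_one⟩) hmm hmm.1
        rw [hM0] at this; exact this
      · have := hmono.monotoneOn hmm (Set.mem_Icc.mpr ⟨zero_le_one, le_refl 1⟩) hmm.2
        rw [hM1] at this; exact this
    have hlu : l * u ∈ Set.Icc (0:ℝ) 1 := by
      constructor
      · positivity
      · calc l * u ≤ 1 * 1 := mul_le_mul hl1 hu1 hu0 zero_le_one
          _ = 1 := by ring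
    have := hMinvMono _ hMmm _ hlu hc
    rwa [hinv' _ hmm] at this
  have hpos : ∀ t, 1 ≤ t → 0 < φ t := by
    intro t ht
    have ht0 : 0 < t := by linarith
    rw [hφ t ht]
    have : 0 < Minv (1 / t) := hMinvPos _ (by positivity) (by rw [div_le_one ht0]; linarith)
    positivity
  have hmonoφ : ∀ t t', 1 ≤ t → t ≤ t' → φ t ≤ φ t' := by
    intro t t' ht htt
    have ht0 : 0 < t := by linarith
    have ht'0 : 0 < t' := by linarith
    rw [hφ t ht, hφ t' (by linarith)]
    have h1 : (0:ℝ) < Minv (1 / t') := hMinvPos _ (by positivity) (by rw [div_le_one ht'0]; linarith)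
    have h2 : Minv (1 / t') ≤ Minv (1 / t) := by
      apply hMinvMono
      · exact ⟨by positivity, by rw [div_le_one ht'0]; linarith⟩
      · exact ⟨by positivity, by rw [div_le_one ht0]; linarith⟩
      · exact one_div_le_one_div_of_le ht0 htt
    exact one_div_le_one_div_of_le h1 h2
  refine ⟨hpos, hmonoφ, ?_⟩
  intro t C ht hC
  have ht0 : 0 < t := by linarith
  have hC0 : 0 < C := by linarith
  rw [hφ t ht, hφ (C * t) (by nlinarith)]
  have hkey' := hkey (1/C) (1/t) (by positivity) (by rw [div_le_one hC0]; linarith)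
    (by positivity) (by rw [div_le_one ht0]; linarith)
  have heq : (1/C) * (1/t) = 1 / (C * t) := by ring
  rw [heq] at hkey'
  have hMt : 0 < Minv (1 / t) := hMinvPos _ (by positivity) (by rw [div_le_one ht0]; linarith)
  have hMct : 0 < Minv (1 / (C * t)) := hMinvPos _ (by positivity)
    (by rw [div_le_one (by positivity)]; nlinarith)
  have hcp : (0:ℝ) < C ^ (1/p) := Real.rpow_pos_of_pos hC0 _
  have hCinv : (1/C) ^ (1/p) = 1 / C ^ (1/p) := by
    rw [Real.div_rpow zero_le_one hC0.le, Real.one_rpow]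
  have h2 : Minv (1/t) ≤ C ^ (1/p) * Minv (1/(C*t)) := by
    calc Minv (1/t) = C ^ (1/p) * ((1/C) ^ (1/p) * Minv (1/t)) := by
          rw [hCinv]; field_simp
      _ ≤ C ^ (1/p) * Minv (1/(C*t)) := mul_le_mul_of_nonneg_left hkey' hcp.le
  rw [div_le_iff₀ hMct, show C ^ (1/p) * (1 / Minv (1/t)) * Minv (1/(C*t))
      = (C ^ (1/p) * Minv (1/(C*t))) / Minv (1/t) from by ring, le_div_iff₀ hMt, one_mul]
  exact h2

/-- Equivalence `2^{-2/p} Λ(k) ≤ Θ(k) ≤ 2^{1/p} Λ(k)` of the two extremal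
quantities controlling entropy numbers of diagonal operators between Orlicz
sequence spaces. -/
theorem stmt_19 (p : ℝ) (hp0 : 0 < p) (hp1 : p ≤ 1) (M₁ M₂ Minv₁ Minv₂ : ℝ → ℝ)
    (hcont₁ : ContinuousOn M₁ (Set.Icc 0 1)) (hcont₂ : ContinuousOn M₂ (Set.Icc 0 1))
    (hmono₁ : StrictMonoOn M₁ (Set.Icc 0 1)) (hmono₂ : StrictMonoOn M₂ (Set.Icc 0 1))
    (hconv₁ : ConvexOn ℝ (Set.Icc 0 1) (fun t => M₁ (t ^ (1 / p))))
    (hconv₂ : ConvexOn ℝ (Set.Icc 0 1) (fun t => M₂ (t ^ (1 / p))))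
    (hM₁0 : M₁ 0 = 0) (hM₁1 : M₁ 1 = 1) (hM₂0 : M₂ 0 = 0) (hM₂1 : M₂ 1 = 1)
    (hinv₁ : ∀ t ∈ Set.Icc (0:ℝ) 1, M₁ (Minv₁ t) = t)
    (hinv₁' : ∀ t ∈ Set.Icc (0:ℝ) 1, Minv₁ (M₁ t) = t)
    (hinv₂ : ∀ t ∈ Set.Icc (0:ℝ) 1, M₂ (Minv₂ t) = t)
    (hinv₂' : ∀ t ∈ Set.Icc (0:ℝ) 1, Minv₂ (M₂ t) = t)
    (φ₁ φ₂ : ℝ → ℝ)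
    (hφ₁ : ∀ t ≥ (1:ℝ), φ₁ t = 1 / Minv₁ (1 / t))
    (hφ₂ : ∀ t ≥ (1:ℝ), φ₂ t = 1 / Minv₂ (1 / t))
    (α : ℕ → ℝ) (hα0 : ∀ i, 0 ≤ α i) (hαmono : ∀ i j : ℕ, i ≤ j → α j ≤ α i)
    (k : ℕ) (hk : 1 ≤ k)
    (Θ Λ : ℝ)
    (hΘ : Θ = sSup {v : ℝ | ∃ n : ℕ, k ≤ n ∧ n ≤ 2 ^ (k - 1) ∧
      v = α n * φ₂ ((k : ℝ) / Real.logb 2 (2 * (n : ℝ) / (k : ℝ))) /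
            φ₁ ((k : ℝ) / Real.logb 2 (2 * (n : ℝ) / (k : ℝ)))})
    (hΛ : Λ = sSup {v : ℝ | ∃ s : ℕ, 1 ≤ s ∧ s ≤ k ∧
      v = α (k * 2 ^ (s - 1)) * φ₂ ((k : ℝ) / (s : ℝ)) / φ₁ ((k : ℝ) / (s : ℝ))}) :
    (2 : ℝ) ^ (-(2 / p)) * Λ ≤ Θ ∧ Θ ≤ (2 : ℝ) ^ (1 / p) * Λ := by
  obtain ⟨hpos₁, hmφ₁, hsc₁⟩ :=
    aux_phi p hp0 M₁ Minv₁ hcont₁ hmono₁ hconv₁ hM₁0 hM₁1 hinv₁ hinv₁' φ₁ hφ₁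
  obtain ⟨hpos₂, hmφ₂, hsc₂⟩ :=
    aux_phi p hp0 M₂ Minv₂ hcont₂ hmono₂ hconv₂ hM₂0 hM₂1 hinv₂ hinv₂' φ₂ hφ₂
  have hk1 : (1:ℝ) ≤ (k:ℝ) := by exact_mod_cast hk
  have hk0 : (0:ℝ) < (k:ℝ) := by linarith
  set fΘ : ℕ → ℝ := fun n => α n * φ₂ ((k : ℝ) / Real.logb 2 (2 * (n : ℝ) / (k : ℝ))) /
      φ₁ ((k : ℝ) / Real.logb 2 (2 * (n : ℝ) / (k : ℝ))) with hfΘ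
  set fΛ : ℕ → ℝ := fun s => α (k * 2 ^ (s - 1)) * φ₂ ((k : ℝ) / (s : ℝ)) /
      φ₁ ((k : ℝ) / (s : ℝ)) with hfΛ
  set SΘ : Set ℝ := {v : ℝ | ∃ n : ℕ, k ≤ n ∧ n ≤ 2 ^ (k - 1) ∧ v = fΘ n} with hSΘ
  set SΛ : Set ℝ := {v : ℝ | ∃ s : ℕ, 1 ≤ s ∧ s ≤ k ∧ v = fΛ s} with hSΛ
  have hΘ' : Θ = sSup SΘ := hΘ
  have hΛ' : Λ = sSup SΛ := hΛ
  clear hΘ hΛ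
  -- finiteness and boundedness
  have hfinΘ : SΘ.Finite := by
    apply Set.Finite.subset ((Set.finite_Icc k (2 ^ (k-1))).image fΘ)
    rintro v ⟨n, hn1, hn2, rfl⟩
    exact ⟨n, Set.mem_Icc.mpr ⟨hn1, hn2⟩, rfl⟩
  have hfinΛ : SΛ.Finite := by
    apply Set.Finite.subset ((Set.finite_Icc 1 k).image fΛ)
    rintro v ⟨s, hs1, hs2, rfl⟩
    exact ⟨s, Set.mem_Icc.mpr ⟨hs1, hs2⟩, rfl⟩
  have hbddΘ : BddAbove SΘ := hfinΘ.bddAbove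
  have hbddΛ : BddAbove SΛ := hfinΛ.bddAbove
  -- logb facts for admissible n
  have hLfacts : ∀ n : ℕ, k ≤ n → n ≤ 2 ^ (k - 1) →
      1 ≤ Real.logb 2 (2 * (n : ℝ) / (k : ℝ)) ∧ Real.logb 2 (2 * (n : ℝ) / (k : ℝ)) ≤ k := by
    intro n hn1 hn2
    have hnk : (k:ℝ) ≤ (n:ℝ) := by exact_mod_cast hn1
    have hq0 : (0:ℝ) < 2 * (n:ℝ) / k := div_pos (by linarith) hk0
    constructor
    · rw [show (1:ℝ) = Real.logb 2 2 from (Real.logb_self_eq_one (by norm_num)).symm]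
      apply Real.logb_le_logb_of_le (by norm_num) (by norm_num)
      rw [le_div_iff₀ hk0]; linarith
    · have h2n : (n:ℝ) ≤ (2:ℝ) ^ ((k:ℕ) - 1 : ℕ) := by exact_mod_cast hn2
      rw [Real.logb_le_iff_le_rpow (by norm_num) hq0]
      rw [div_le_iff₀ hk0]
      have h1 : (2:ℝ) ^ ((k:ℝ)) = ((2:ℝ) ^ (k:ℕ)) := by
        rw [Real.rpow_natCast]
      rw [h1]
      have h2 : (2:ℝ) ^ (k:ℕ) = 2 * (2:ℝ) ^ (k - 1 : ℕ) := by
        rw [← pow_succ']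
        congr 1
        omega
      have : (2:ℝ) ^ (k-1:ℕ) * 1 ≤ (2:ℝ)^(k-1:ℕ) * k := by
        apply mul_le_mul_of_nonneg_left hk1 (by positivity)
      nlinarith
  -- nonnegativity of elements
  have hΘel : ∀ v ∈ SΘ, 0 ≤ v := by
    rintro v ⟨n, hn1, hn2, rfl⟩
    obtain ⟨hL1, hLk⟩ := hLfacts n hn1 hn2
    have hL0 : (0:ℝ) < Real.logb 2 (2 * (n : ℝ) / (k : ℝ)) := by linarith
    have hA1 : (1:ℝ) ≤ (k:ℝ) / Real.logb 2 (2 * (n : ℝ) / (k : ℝ)) := by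
      rw [le_div_iff₀ hL0]; linarith
    have hh1 := hpos₁ _ hA1
    have hh2 := (hpos₂ _ hA1).le
    simp only [hfΘ]
    exact div_nonneg (mul_nonneg (hα0 n) hh2) hh1.le
  have hΛel : ∀ v ∈ SΛ, 0 ≤ v := by
    rintro v ⟨s, hs1, hs2, rfl⟩
    have hs1' : (1:ℝ) ≤ (s:ℝ) := by exact_mod_cast hs1
    have hsk : (s:ℝ) ≤ (k:ℝ) := by exact_mod_cast hs2
    have hB1 : (1:ℝ) ≤ (k:ℝ) / (s:ℝ) := by rw [le_div_iff₀ (by linarith)]; linarith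
    have hh1 := hpos₁ _ hB1
    have hh2 := (hpos₂ _ hB1).le
    simp only [hfΛ]
    exact div_nonneg (mul_nonneg (hα0 _) hh2) hh1.le
  have hΛ0 : 0 ≤ Λ := by
    rw [hΛ']
    have hmem : fΛ 1 ∈ SΛ := ⟨1, le_refl 1, hk, rfl⟩
    exact le_trans (hΛel _ hmem) (le_csSup hbddΛ hmem)
  have hΘ0 : 0 ≤ Θ := by
    rw [hΘ']
    have hmem : fΘ k ∈ SΘ := ⟨k, le_refl k, aux_k_le' k hk, rfl⟩
    exact le_trans (hΘel _ hmem) (le_csSup hbddΘ hmem)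
  have h2p : (0:ℝ) < (2:ℝ) ^ (1/p) := Real.rpow_pos_of_pos (by norm_num) _
  have h22p : (0:ℝ) < (2:ℝ) ^ (2/p) := Real.rpow_pos_of_pos (by norm_num) _
  -- Claim 1 : every element of SΘ is ≤ 2^{1/p} Λ
  have claim1 : ∀ v ∈ SΘ, v ≤ (2:ℝ) ^ (1/p) * Λ := by
    rintro v ⟨n, hn1, hn2, rfl⟩
    obtain ⟨hL1, hLk⟩ := hLfacts n hn1 hn2
    set L := Real.logb 2 (2 * (n : ℝ) / (k : ℝ)) with hL
    have hL0 : (0:ℝ) < L := by linarith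
    set s := ⌊L⌋₊ with hs
    have hs1 : 1 ≤ s := Nat.le_floor (by exact_mod_cast hL1)
    have hsk : s ≤ k := by
      have := Nat.floor_le_floor hLk
      rwa [Nat.floor_natCast] at this
    have hsL : (s:ℝ) ≤ L := Nat.floor_le hL0.le
    have hLs : L < s + 1 := Nat.lt_floor_add_one L
    have hs1' : (1:ℝ) ≤ (s:ℝ) := by exact_mod_cast hs1
    have hsk' : (s:ℝ) ≤ (k:ℝ) := by exact_mod_cast hsk
    have hs0 : (0:ℝ) < (s:ℝ) := by linarith
    -- k * 2^(s-1) ≤ n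
    have hkn : k * 2 ^ (s - 1) ≤ n := by
      have hcast : ((s - 1 : ℕ) : ℝ) = (s:ℝ) - 1 := by
        have : (1:ℕ) ≤ s := hs1
        push_cast [this]
        ring
      have h1 : (2:ℝ) ^ (s - 1 : ℕ) = (2:ℝ) ^ ((s:ℝ) - 1) := by
        rw [← Real.rpow_natCast 2 (s-1), hcast]
      have h2 : (2:ℝ) ^ ((s:ℝ) - 1) ≤ (2:ℝ) ^ (L - 1) := by
        apply Real.rpow_le_rpow_of_exponent_le (by norm_num)
        linarith
      have h3 : (2:ℝ) ^ (L - 1) = (n:ℝ) / k := by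
        have hnk : (k:ℝ) ≤ (n:ℝ) := by exact_mod_cast hn1
        rw [Real.rpow_sub (by norm_num), Real.rpow_logb (by norm_num) (by norm_num)
          (div_pos (by linarith) hk0), Real.rpow_one]
        field_simp
      have h4 : (k:ℝ) * 2 ^ (s - 1 : ℕ) ≤ (n:ℝ) := by
        rw [h1]
        calc (k:ℝ) * (2:ℝ) ^ ((s:ℝ) - 1) ≤ (k:ℝ) * ((n:ℝ)/k) := by
              apply mul_le_mul_of_nonneg_left _ hk0.le
              rw [← h3]; exact h2
          _ = n := by field_simp
      exact_mod_cast h4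
    have hα : α n ≤ α (k * 2 ^ (s - 1)) := hαmono _ _ hkn
    -- φ estimates
    have hA1 : (1:ℝ) ≤ (k:ℝ) / L := by rw [le_div_iff₀ hL0]; linarith
    have hB1 : (1:ℝ) ≤ (k:ℝ) / s := by rw [le_div_iff₀ hs0]; linarith
    have hAB : (k:ℝ) / L ≤ (k:ℝ) / s := by
      apply div_le_div_of_nonneg_left hk0.le hs0 hsL
    have hBA : (k:ℝ) / s = (L / s) * ((k:ℝ) / L) := by
      field_simp
    have hC1 : (1:ℝ) ≤ L / s := by rw [le_div_iff₀ hs0]; linarith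
    have hC2 : L / s ≤ 2 := by rw [div_le_iff₀ hs0]; linarith
    have hφ₁B : φ₁ ((k:ℝ)/s) ≤ (2:ℝ) ^ (1/p) * φ₁ ((k:ℝ)/L) := by
      calc φ₁ ((k:ℝ)/s) = φ₁ ((L/s) * ((k:ℝ)/L)) := by rw [← hBA]
        _ ≤ (L/s) ^ (1/p) * φ₁ ((k:ℝ)/L) := hsc₁ _ _ hA1 hC1
        _ ≤ (2:ℝ) ^ (1/p) * φ₁ ((k:ℝ)/L) := by
            apply mul_le_mul_of_nonneg_right _ (hpos₁ _ hA1).le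
            exact Real.rpow_le_rpow (by positivity) hC2 (by positivity)
    have hφ₂AB : φ₂ ((k:ℝ)/L) ≤ φ₂ ((k:ℝ)/s) := hmφ₂ _ _ hA1 hAB
    have hkey : fΘ n ≤ (2:ℝ) ^ (1/p) * fΛ s := by
      simp only [hfΘ, hfΛ]
      exact aux_quot (hα0 n) hα (hpos₂ _ hA1).le hφ₂AB (hpos₁ _ hA1) (hpos₁ _ hB1) hφ₁B
    calc fΘ n ≤ (2:ℝ) ^ (1/p) * fΛ s := hkey
      _ ≤ (2:ℝ) ^ (1/p) * Λ := by
          apply mul_le_mul_of_nonneg_left _ h2p.le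
          rw [hΛ']
          exact le_csSup hbddΛ ⟨s, hs1, hsk, rfl⟩
  -- Claim 2 : every element of SΛ is ≤ 2^{2/p} Θ
  have claim2 : ∀ v ∈ SΛ, v ≤ (2:ℝ) ^ (2/p) * Θ := by
    rintro v ⟨s, hs1, hs2, rfl⟩
    have hs1' : (1:ℝ) ≤ (s:ℝ) := by exact_mod_cast hs1
    have hsk' : (s:ℝ) ≤ (k:ℝ) := by exact_mod_cast hs2
    have hs0 : (0:ℝ) < (s:ℝ) := by linarith
    have h2p1 : (1:ℝ) ≤ (2:ℝ) ^ (2/p) := by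
      apply Real.one_le_rpow (by norm_num) (by positivity)
    by_cases hcase : k * 2 ^ (s - 1) ≤ 2 ^ (k - 1)
    · -- n = k * 2^(s-1) is admissible, and fΛ s = fΘ n
      set n := k * 2 ^ (s - 1) with hn
      have hkn : k ≤ n := Nat.le_mul_of_pos_right k (Nat.pow_pos (by norm_num))
      have hlog : Real.logb 2 (2 * (n : ℝ) / (k : ℝ)) = s := by
        have hq : 2 * (n:ℝ) / k = (2:ℝ) ^ (s:ℕ) := by
          push_cast [hn]
          rw [mul_div_assoc, mul_comm ((k:ℝ)), mul_div_assoc, div_self hk0.ne', mul_one,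
            ← pow_succ']
          congr 1
          omega
        rw [hq, ← Real.rpow_natCast 2 s, Real.logb_rpow (by norm_num) (by norm_num)]
      have heq : fΛ s = fΘ n := by
        simp only [hfΘ, hfΛ, hlog]
        rfl
      have hmem : fΘ n ∈ SΘ := ⟨n, hkn, hcase, rfl⟩
      calc fΛ s = fΘ n := heq
        _ ≤ Θ := by rw [hΘ']; exact le_csSup hbddΘ hmem
        _ ≤ (2:ℝ) ^ (2/p) * Θ := by nlinarith
    · -- n = 2^(k-1)
      push_neg at hcase
      set n := 2 ^ (k - 1) with hn
      have hkn : k ≤ n := aux_k_le' k hk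
      have hmem : fΘ n ∈ SΘ := ⟨n, hkn, le_refl n, rfl⟩
      have hn' : (2:ℝ) * (n:ℝ) = (2:ℝ) ^ (k:ℕ) := by
        push_cast [hn]
        rw [← pow_succ']
        congr 1
        omega
      have hlogk0 : 0 ≤ Real.logb 2 (k:ℝ) := Real.logb_nonneg (by norm_num) hk1
      have hlogk1 : Real.logb 2 (k:ℝ) ≤ (k:ℝ) - 1 := by
        have h1 : (k:ℝ) ≤ (2:ℝ) ^ (k - 1 : ℕ) := by exact_mod_cast hkn
        have h2 : Real.logb 2 ((2:ℝ) ^ (k-1:ℕ)) = ((k-1:ℕ):ℝ) := by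
          rw [← Real.rpow_natCast 2 (k-1), Real.logb_rpow (by norm_num) (by norm_num)]
        calc Real.logb 2 (k:ℝ) ≤ Real.logb 2 ((2:ℝ) ^ (k-1:ℕ)) :=
              Real.logb_le_logb_of_le (by norm_num) hk0 h1
          _ = ((k-1:ℕ):ℝ) := h2
          _ = (k:ℝ) - 1 := by
              have : (1:ℕ) ≤ k := hk
              push_cast [this]; ring
      have hlogk3 : 4 * Real.logb 2 (k:ℝ) ≤ 3 * (k:ℝ) := by
        have h1 : (k:ℝ)^4 ≤ 8 ^ k := aux_pow4 k hk
        have h2 : (8:ℝ) ^ k = (2:ℝ) ^ (3 * k : ℕ) := by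
          rw [pow_mul]; norm_num
        have h3 : Real.logb 2 ((k:ℝ)^4) ≤ Real.logb 2 ((2:ℝ) ^ (3*k:ℕ)) := by
          apply Real.logb_le_logb_of_le (by norm_num) (by positivity)
          rw [← h2]; exact h1
        rw [Real.logb_pow, ← Real.rpow_natCast 2 (3*k),
          Real.logb_rpow (by norm_num) (by norm_num)] at h3
        push_cast at h3
        linarith
      set L := Real.logb 2 (2 * (n : ℝ) / (k : ℝ)) with hL
      have hLval : L = (k:ℝ) - Real.logb 2 (k:ℝ) := by
        rw [hL, Real.logb_div (by positivity) hk0.ne', hn', ← Real.rpow_natCast 2 k,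
          Real.logb_rpow (by norm_num) (by norm_num)]
      have hL1 : (1:ℝ) ≤ L := by rw [hLval]; linarith
      have hL0 : (0:ℝ) < L := by linarith
      have hLk : L ≤ (k:ℝ) := by rw [hLval]; linarith
      -- L ≤ s
      have hLs : L ≤ (s:ℝ) := by
        have h1 : ((2:ℝ) ^ (k-1:ℕ)) ≤ (k:ℝ) * (2:ℝ) ^ (s-1:ℕ) := by
          exact_mod_cast hcase.le
        have h2 : Real.logb 2 ((2:ℝ) ^ (k-1:ℕ)) ≤ Real.logb 2 ((k:ℝ) * (2:ℝ) ^ (s-1:ℕ)) :=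
          Real.logb_le_logb_of_le (by norm_num) (by positivity) h1
        rw [Real.logb_mul hk0.ne' (by positivity), ← Real.rpow_natCast 2 (k-1),
          ← Real.rpow_natCast 2 (s-1), Real.logb_rpow (by norm_num) (by norm_num),
          Real.logb_rpow (by norm_num) (by norm_num)] at h2
        have hck : ((k-1:ℕ):ℝ) = (k:ℝ) - 1 := by
          have : (1:ℕ) ≤ k := hk; push_cast [this]; ring
        have hcs : ((s-1:ℕ):ℝ) = (s:ℝ) - 1 := by
          have : (1:ℕ) ≤ s := hs1; push_cast [this]; ring
        rw [hck, hcs] at h2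
        rw [hLval]
        linarith
      -- s ≤ 4 L
      have hs4L : (s:ℝ) ≤ 4 * L := by
        rw [hLval]
        calc (s:ℝ) ≤ (k:ℝ) := hsk'
          _ ≤ 4 * ((k:ℝ) - Real.logb 2 (k:ℝ)) := by linarith
      have hA1 : (1:ℝ) ≤ (k:ℝ) / s := by rw [le_div_iff₀ hs0]; linarith
      have hB1 : (1:ℝ) ≤ (k:ℝ) / L := by rw [le_div_iff₀ hL0]; linarith
      have hAB : (k:ℝ) / s ≤ (k:ℝ) / L := div_le_div_of_nonneg_left hk0.le hL0 hLs
      have hBA : (k:ℝ) / L = ((s:ℝ) / L) * ((k:ℝ) / s) := by field_simp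
      have hC1 : (1:ℝ) ≤ (s:ℝ) / L := by rw [le_div_iff₀ hL0]; linarith
      have hC4 : (s:ℝ) / L ≤ 4 := by rw [div_le_iff₀ hL0]; linarith
      have h4p : ((4:ℝ)) ^ (1/p) = (2:ℝ) ^ (2/p) := by
        rw [show (4:ℝ) = (2:ℝ) ^ (2:ℝ) from by
          rw [show (2:ℝ) = ((2:ℕ):ℝ) from by norm_num, Real.rpow_natCast]; norm_num,
          ← Real.rpow_mul (by norm_num)]
        norm_num
        ring_nf
      have hφ₁B : φ₁ ((k:ℝ)/L) ≤ (2:ℝ) ^ (2/p) * φ₁ ((k:ℝ)/s) := by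
        calc φ₁ ((k:ℝ)/L) = φ₁ (((s:ℝ)/L) * ((k:ℝ)/s)) := by rw [← hBA]
          _ ≤ ((s:ℝ)/L) ^ (1/p) * φ₁ ((k:ℝ)/s) := hsc₁ _ _ hA1 hC1
          _ ≤ (2:ℝ) ^ (2/p) * φ₁ ((k:ℝ)/s) := by
              apply mul_le_mul_of_nonneg_right _ (hpos₁ _ hA1).le
              rw [← h4p]
              exact Real.rpow_le_rpow (by positivity) hC4 (by positivity)
      have hφ₂AB : φ₂ ((k:ℝ)/s) ≤ φ₂ ((k:ℝ)/L) := hmφ₂ _ _ hA1 hAB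
      have hα : α (k * 2 ^ (s - 1)) ≤ α n := hαmono _ _ hcase.le
      have hkey : fΛ s ≤ (2:ℝ) ^ (2/p) * fΘ n := by
        simp only [hfΘ, hfΛ, ← hL]
        exact aux_quot (hα0 _) hα (hpos₂ _ hA1).le hφ₂AB (hpos₁ _ hA1) (hpos₁ _ hB1) hφ₁B
      calc fΛ s ≤ (2:ℝ) ^ (2/p) * fΘ n := hkey
        _ ≤ (2:ℝ) ^ (2/p) * Θ := by
            apply mul_le_mul_of_nonneg_left _ h22p.le
            rw [hΘ']; exact le_csSup hbddΘ hmem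
  constructor
  · -- lower bound
    have h1 : Λ ≤ (2:ℝ) ^ (2/p) * Θ := by
      rw [hΛ']
      exact Real.sSup_le claim2 (mul_nonneg h22p.le hΘ0)
    rw [show (2:ℝ) ^ (-(2/p)) = ((2:ℝ) ^ (2/p))⁻¹ from Real.rpow_neg (by norm_num) _,
      inv_mul_le_iff₀ h22p]
    exact h1
  · rw [hΘ']
    exact Real.sSup_le claim1 (mul_nonneg h2p.le hΛ0)
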